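/- Suppose f ≠ 0 and f(v) = g(B v) for all v ∈ H, where g is a continuous linear functional on V (the membrane/shear dominated case). Then the solutions u^ε of the scaled problem satisfy lim_{ε→0⁺} ε² ⟨A u^ε, A u^ε⟩_U / ⟨B u^ε, B u^ε⟩_V = 0. -/
import Mathlib


open RealInnerProductSpace Filter Topology

/-- Suppose f ≠ 0 and f(v) = g(B v) for all v ∈ H, where g is a continuous linear
functional on V (the membrane/shear dominated case). Then the solutions u^ε of the scaled
problem satisfy lim_{ε→0⁺} ε² ⟨A u^ε, A u^ε⟩_U / ⟨B u^ε, B u^ε⟩_V = 0. -/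
theorem stmt_11
    {H U V : Type*}
    [NormedAddCommGroup H] [InnerProductSpace ℝ H] [CompleteSpace H]
    [NormedAddCommGroup U] [InnerProductSpace ℝ U] [CompleteSpace U]
    [NormedAddCommGroup V] [InnerProductSpace ℝ V] [CompleteSpace V]
    (A : H →L[ℝ] U) (B : H →L[ℝ] V)
    (c₁ c₂ : ℝ) (hc₁ : 0 < c₁) (hc₂ : 0 < c₂)
    (hlow : ∀ v : H, c₁ * ‖v‖ ≤ ‖A v‖ + ‖B v‖)
    (hup : ∀ v : H, ‖A v‖ + ‖B v‖ ≤ c₂ * ‖v‖)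
    (f : H →L[ℝ] ℝ) (hf : f ≠ 0)
    (g : V →L[ℝ] ℝ) (hfg : ∀ v : H, f v = g (B v))
    (u : ℝ → H)
    (hu : ∀ ε : ℝ, 0 < ε → ∀ v : H,
      ε ^ 2 * ⟪A (u ε), A v⟫ + ⟪B (u ε), B v⟫ = f v) :
    Tendsto (fun ε : ℝ => ε ^ 2 * ⟪A (u ε), A (u ε)⟫ / ⟪B (u ε), B (u ε)⟫)
      (𝓝[>] 0) (𝓝 0) := by
  classical
  set Sset : Set ℝ := {x : ℝ | ∃ v : H, x = 2 * f v - ‖B v‖ ^ 2} with hSset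
  have hne : Sset.Nonempty := ⟨2 * f 0 - ‖B 0‖ ^ 2, 0, rfl⟩
  have hbdd : BddAbove Sset := by
    refine ⟨‖g‖ ^ 2, ?_⟩
    rintro x ⟨v, rfl⟩
    have h1 : f v = g (B v) := hfg v
    have h2 : g (B v) ≤ ‖g‖ * ‖B v‖ := (le_abs_self _).trans (by
      simpa [Real.norm_eq_abs] using g.le_opNorm (B v))
    nlinarith [sq_nonneg (‖B v‖ - ‖g‖)]
  set S : ℝ := sSup Sset with hS
  have hle : ∀ v : H, 2 * f v - ‖B v‖ ^ 2 ≤ S := fun v => le_csSup hbdd ⟨v, rfl⟩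
  obtain ⟨v₀, hv₀⟩ : ∃ v, f v ≠ 0 := by
    by_contra h; push_neg at h
    exact hf (ContinuousLinearMap.ext fun v => by simpa using h v)
  have hBv₀ : B v₀ ≠ 0 := fun h => hv₀ (by rw [hfg v₀, h, map_zero])
  have hBn : (0:ℝ) < ‖B v₀‖ := norm_pos_iff.mpr hBv₀
  have hSpos : 0 < S := by
    have h := hle ((f v₀ / ‖B v₀‖ ^ 2) • v₀)
    have e1 : f ((f v₀ / ‖B v₀‖ ^ 2) • v₀) = (f v₀ / ‖B v₀‖ ^ 2) * f v₀ := by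
      simp [map_smul, smul_eq_mul]
    have e2 : ‖B ((f v₀ / ‖B v₀‖ ^ 2) • v₀)‖ ^ 2
        = (f v₀ / ‖B v₀‖ ^ 2) ^ 2 * ‖B v₀‖ ^ 2 := by
      rw [map_smul, norm_smul, mul_pow, Real.norm_eq_abs, sq_abs]
    rw [e1, e2] at h
    have hB2 : (0:ℝ) < ‖B v₀‖ ^ 2 := by positivity
    have hfv2 : (0:ℝ) < (f v₀) ^ 2 := by positivity
    have e3 : 2 * (f v₀ / ‖B v₀‖ ^ 2 * f v₀) - (f v₀ / ‖B v₀‖ ^ 2) ^ 2 * ‖B v₀‖ ^ 2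
        = (f v₀) ^ 2 / ‖B v₀‖ ^ 2 := by
      field_simp; ring
    rw [e3] at h
    exact lt_of_lt_of_le (by positivity) h
  -- variational characterization: u ε minimizes the energy
  have key : ∀ ε : ℝ, 0 < ε → ∀ w : H,
      ε ^ 2 * ‖A (u ε)‖ ^ 2 + ‖B (u ε)‖ ^ 2 - 2 * f (u ε)
        ≤ ε ^ 2 * ‖A w‖ ^ 2 + ‖B w‖ ^ 2 - 2 * f w := by
    intro ε hε w
    have h1 := hu ε hε (w - u ε)
    have hAw : A w = A (u ε) + A (w - u ε) := by rw [map_sub]; abel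
    have hBw : B w = B (u ε) + B (w - u ε) := by rw [map_sub]; abel
    have e1 : ‖A w‖ ^ 2
        = ‖A (u ε)‖ ^ 2 + 2 * ⟪A (u ε), A (w - u ε)⟫ + ‖A (w - u ε)‖ ^ 2 := by
      rw [hAw, norm_add_sq_real]
    have e2 : ‖B w‖ ^ 2
        = ‖B (u ε)‖ ^ 2 + 2 * ⟪B (u ε), B (w - u ε)⟫ + ‖B (w - u ε)‖ ^ 2 := by
      rw [hBw, norm_add_sq_real]
    have e3 : f (w - u ε) = f w - f (u ε) := by rw [map_sub]
    rw [e3] at h1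
    nlinarith [mul_nonneg (sq_nonneg ε) (sq_nonneg ‖A (w - u ε)‖),
      sq_nonneg ‖B (w - u ε)‖]
  -- now the limit
  rw [Metric.tendsto_nhdsWithin_nhds]
  intro η hη
  set δ : ℝ := min (S / 4) (η * S / 8) with hδdef
  have hδpos : 0 < δ := lt_min (by positivity) (by positivity)
  have hδ1 : δ ≤ S / 4 := min_le_left _ _
  have hδ2 : δ ≤ η * S / 8 := min_le_right _ _
  obtain ⟨x, hxmem, hx⟩ := exists_lt_of_lt_csSup hne (show S - δ / 2 < S by linarith)
  obtain ⟨w, rfl⟩ := hxmem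
  refine ⟨Real.sqrt (δ / 2) / (‖A w‖ + 1), by positivity, ?_⟩
  intro ε hεmem hεd
  have hε : 0 < ε := hεmem
  have hεlt : ε < Real.sqrt (δ / 2) / (‖A w‖ + 1) := by
    rwa [Real.dist_eq, sub_zero, abs_of_pos hε] at hεd
  have hAwb : ε ^ 2 * ‖A w‖ ^ 2 ≤ δ / 2 := by
    have h1 : ε * (‖A w‖ + 1) < Real.sqrt (δ / 2) := by
      rw [lt_div_iff₀ (by positivity)] at hεlt
      linarith
    have h2 : (ε * (‖A w‖ + 1)) ^ 2 < δ / 2 := by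
      have hs := Real.sq_sqrt (by positivity : (0:ℝ) ≤ δ / 2)
      have hp : 0 ≤ ε * (‖A w‖ + 1) := by positivity
      nlinarith [Real.sqrt_nonneg (δ / 2)]
    nlinarith [norm_nonneg (A w), sq_nonneg ε, mul_nonneg hε.le (norm_nonneg (A w))]
  have hid := hu ε hε (u ε)
  rw [real_inner_self_eq_norm_sq, real_inner_self_eq_norm_sq] at hid
  have hmin := key ε hε w
  have hub := hle (u ε)
  obtain ⟨a, ha_def⟩ : ∃ a : ℝ, a = ε ^ 2 * ‖A (u ε)‖ ^ 2 := ⟨_, rfl⟩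
  obtain ⟨b, hb_def⟩ : ∃ b : ℝ, b = ‖B (u ε)‖ ^ 2 := ⟨_, rfl⟩
  rw [← ha_def, ← hb_def] at hid
  have hgoal : ε ^ 2 * ⟪A (u ε), A (u ε)⟫ / ⟪B (u ε), B (u ε)⟫ = a / b := by
    rw [real_inner_self_eq_norm_sq, real_inner_self_eq_norm_sq, ← ha_def, ← hb_def]
  rw [← ha_def, ← hb_def] at hmin
  rw [← hb_def] at hub
  -- a + b = f (u ε), lower bound:
  have hab : S - δ ≤ a + b := by linarith [hid, hmin, hx, hAwb]
  have h2ab : 2 * a + b ≤ S := by linarith [hid, hub]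
  have ha : a ≤ δ := by linarith
  have hbpos : S / 2 ≤ b := by linarith
  have hbpos' : (0:ℝ) < b := lt_of_lt_of_le (by positivity) hbpos
  have hanon : (0:ℝ) ≤ a := ha_def ▸ by positivity
  rw [Real.dist_eq, sub_zero, hgoal]
  rw [abs_of_nonneg (div_nonneg hanon hbpos'.le)]
  have hdiv : a / b ≤ 2 * δ / S := by
    rw [div_le_div_iff₀ hbpos' hSpos]
    calc a * S ≤ δ * S := mul_le_mul_of_nonneg_right ha hSpos.le
      _ = (2 * δ) * (S / 2) := by ring
      _ ≤ (2 * δ) * b := mul_le_mul_of_nonneg_left hbpos (by linarith)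
      _ = 2 * δ * b := by ring
  have hfin : 2 * δ / S ≤ η / 4 := by
    rw [div_le_iff₀ hSpos]
    linarith
  linarith
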